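/- arXiv:1104.2579 — 6 statements merged into one kernel-verified Lean document; each statement's English description precedes it below -/
import Mathlib

section
/- Let τ be an idempotent endomorphism of an algebra A. If x, y ∈ A satisfy τ(x) = τ(y), then the congruence on A generated by the pair (x,y) equals the congruence on the state-morphism algebra (A,τ) generated by (x,y); in particular the congruence on A generated by (x,y) is compatible with τ. -/
/-- If τ x = τ y, then the congruence generated by (x,y) is compatible with τ and
is the least τ-compatible congruence containing (x,y), i.e. Θ(x,y) = Θ_τ(x,y). -/
theorem stmt3 {M : Type*} [Monoid M] (τ : M →* M) (hτ : ∀ x, τ (τ x) = τ x)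
    (x y : M) (hxy : τ x = τ y) :
    (∀ a b, conGen (fun a b => a = x ∧ b = y) a b →
      conGen (fun a b => a = x ∧ b = y) (τ a) (τ b)) ∧
    (∀ d : Con M, (∀ a b, d a b → d (τ a) (τ b)) → d x y →
      conGen (fun a b => a = x ∧ b = y) ≤ d) := by
  constructor
  · intro a b h
    induction h with
    | of a b hab => rw [hab.1, hab.2, hxy]; exact (conGen _).refl _
    | refl => exact (conGen _).refl _
    | symm _ ih => exact (conGen _).symm ih
    | trans _ _ ih1 ih2 => exact (conGen _).trans ih1 ih2
    | mul _ _ ih1 ih2 => simpa [map_mul] using (conGen _).mul ih1 ih2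
  · intro d _ hdxy
    exact Con.conGen_le.2 (by intro a b hab; exact hab.1 ▸ hab.2 ▸ hdxy)
end

section
/- Let τ be an idempotent endomorphism of an algebra A. If x and y both lie in the image τ(A), then the congruence on A generated by (x,y) is compatible with τ, and hence equals the smallest τ-compatible congruence containing (x,y). -/
/-- If x, y lie in the image τ(A), then the congruence generated by (x,y) is
compatible with τ, hence equals the least τ-compatible congruence containing (x,y). -/
theorem stmt4 {M : Type*} [Monoid M] (τ : M →* M) (hτ : ∀ x, τ (τ x) = τ x)
    (x y : M) (hx : x ∈ (MonoidHom.mrange τ)) (hy : y ∈ (MonoidHom.mrange τ)) :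
    (∀ a b, conGen (fun a b => a = x ∧ b = y) a b →
      conGen (fun a b => a = x ∧ b = y) (τ a) (τ b)) ∧
    (∀ d : Con M, (∀ a b, d a b → d (τ a) (τ b)) → d x y →
      conGen (fun a b => a = x ∧ b = y) ≤ d) := by
  obtain ⟨u, hu⟩ := hx
  obtain ⟨v, hv⟩ := hy
  have hτx : τ x = x := by rw [← hu, hτ]
  have hτy : τ y = y := by rw [← hv, hτ]
  constructor
  · intro a b h
    induction h with
    | of a b h =>
      exact ConGen.Rel.of _ _ ⟨by rw [h.1, hτx], by rw [h.2, hτy]⟩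
    | refl a => exact ConGen.Rel.refl _
    | symm _ ih => exact ConGen.Rel.symm ih
    | trans _ _ ih1 ih2 => exact ConGen.Rel.trans ih1 ih2
    | mul _ _ ih1 ih2 =>
      simp only [map_mul]
      exact ConGen.Rel.mul ih1 ih2
  · intro d _ hdxy
    apply Con.conGen_le.2
    rintro a b ⟨rfl, rfl⟩
    exact hdxy
end

section
/- Let (M,τ) be a state BL-algebra with τ faithful (Ker(τ) = {1}, where Ker(τ) = {a : τ(a) = 1}). Then (M,τ) is subdirectly irreducible as a state BL-algebra if and only if the image τ(M) is subdirectly irreducible as a BL-algebra. -/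
/-- A BL-algebra: a bounded prelinear divisible integral commutative residuated
lattice. The monoid unit `1` coincides with the top element. -/
class BLAlgebra (M : Type*) extends Lattice M, CommMonoid M, BoundedOrder M where
  residuum : M → M → M
  one_eq_top : (1 : M) = ⊤
  adjoint : ∀ a b c : M, c ≤ residuum a b ↔ a * c ≤ b
  div : ∀ a b : M, a ⊓ b = a * residuum a b
  prelin : ∀ a b : M, residuum a b ⊔ residuum b a = ⊤

/-- A state-operator on a BL-algebra. -/
def IsStateOperator {M : Type*} [BLAlgebra M] (τ : M → M) : Prop :=
  τ ⊥ = ⊥ ∧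
  (∀ x y, τ (BLAlgebra.residuum x y) = BLAlgebra.residuum (τ x) (τ (x ⊓ y))) ∧
  (∀ x y, τ (x * y) = τ x * τ (BLAlgebra.residuum x (x * y))) ∧
  (∀ x y, τ (τ x * τ y) = τ x * τ y) ∧
  (∀ x y, τ (BLAlgebra.residuum (τ x) (τ y)) = BLAlgebra.residuum (τ x) (τ y))

/-- `F` is a (BL-)filter of the subalgebra with underlying set `S`. -/
def IsFilterOn {M : Type*} [BLAlgebra M] (S F : Set M) : Prop :=
  F ⊆ S ∧ (1 : M) ∈ F ∧ (∀ x ∈ F, ∀ y ∈ F, x * y ∈ F) ∧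
    ∀ x ∈ F, ∀ y ∈ S, x ≤ y → y ∈ F

section Aux

variable {M : Type*} [BLAlgebra M]

lemma bl_le_one (a : M) : a ≤ 1 := BLAlgebra.one_eq_top (M := M) ▸ le_top

lemma bl_mul_le_mul_left {a b : M} (c : M) (h : a ≤ b) : c * a ≤ c * b := by
  have hb : b ≤ BLAlgebra.residuum c (c * b) :=
    (BLAlgebra.adjoint c (c * b) b).mpr le_rfl
  exact (BLAlgebra.adjoint c (c * b) a).mp (le_trans h hb)

lemma bl_mul_mono {a b c d : M} (h1 : a ≤ b) (h2 : c ≤ d) : a * c ≤ b * d :=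
  calc a * c ≤ a * d := bl_mul_le_mul_left a h2
  _ = d * a := mul_comm _ _
  _ ≤ d * b := bl_mul_le_mul_left d h1
  _ = b * d := mul_comm _ _

lemma bl_res_self (a : M) : BLAlgebra.residuum a a = 1 :=
  le_antisymm (bl_le_one _) ((BLAlgebra.adjoint a a 1).mpr (by rw [mul_one]))

lemma tau_one {τ : M → M} (h : IsStateOperator τ) : τ 1 = 1 := by
  have h2 := h.2.1 1 1
  rw [bl_res_self, inf_idem] at h2
  rw [h2, bl_res_self]

lemma tau_idem {τ : M → M} (h : IsStateOperator τ) (a : M) : τ (τ a) = τ a := by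
  have h2 := h.2.2.2.1 a 1
  rwa [tau_one h, mul_one] at h2

lemma tau_fix_of_mem_range {τ : M → M} (h : IsStateOperator τ) {x : M}
    (hx : x ∈ Set.range τ) : τ x = x := by
  obtain ⟨a, rfl⟩ := hx; exact tau_idem h a

lemma tau_mono {τ : M → M} (h : IsStateOperator τ) {x y : M} (hxy : x ≤ y) :
    τ x ≤ τ y := by
  have hx : y * BLAlgebra.residuum y x = x := by
    rw [← BLAlgebra.div]; exact inf_eq_right.mpr hxy
  have h2 := h.2.2.1 y (BLAlgebra.residuum y x)
  rw [hx] at h2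
  calc τ x = τ y * τ (BLAlgebra.residuum y x) := h2
  _ ≤ τ y * 1 := bl_mul_mono le_rfl (bl_le_one _)
  _ = τ y := mul_one _

lemma range_mul_mem {τ : M → M} (h : IsStateOperator τ) {x y : M}
    (hx : x ∈ Set.range τ) (hy : y ∈ Set.range τ) : x * y ∈ Set.range τ := by
  refine ⟨x * y, ?_⟩
  conv_lhs => rw [← tau_fix_of_mem_range h hx, ← tau_fix_of_mem_range h hy]
  rw [h.2.2.2.1, tau_fix_of_mem_range h hx, tau_fix_of_mem_range h hy]

lemma exists_ne_one_of_ne_singleton {F : Set M} (h1 : (1 : M) ∈ F)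
    (hne : F ≠ {1}) : ∃ x ∈ F, x ≠ 1 := by
  by_contra hc
  push_neg at hc
  exact hne (Set.Subset.antisymm (fun x hx => hc x hx)
    (by rintro x rfl; exact h1))

/-- The upward closure in `M` of a filter of `range τ` is a τ-invariant filter. -/
lemma upclosure_filter {τ : M → M} (h : IsStateOperator τ) {G : Set M}
    (hG : IsFilterOn (Set.range τ) G) :
    IsFilterOn Set.univ {x : M | ∃ g ∈ G, g ≤ x} ∧
      τ '' {x : M | ∃ g ∈ G, g ≤ x} ⊆ {x : M | ∃ g ∈ G, g ≤ x} := by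
  obtain ⟨hGS, hG1, hGm, hGu⟩ := hG
  refine ⟨⟨fun _ _ => trivial, ⟨1, hG1, le_rfl⟩, ?_, ?_⟩, ?_⟩
  · rintro x ⟨g, hg, hgx⟩ y ⟨f, hf, hfy⟩
    exact ⟨g * f, hGm g hg f hf, bl_mul_mono hgx hfy⟩
  · rintro x ⟨g, hg, hgx⟩ y _ hxy
    exact ⟨g, hg, le_trans hgx hxy⟩
  · rintro _ ⟨x, ⟨g, hg, hgx⟩, rfl⟩
    refine ⟨g, hg, ?_⟩
    calc g = τ g := (tau_fix_of_mem_range h (hGS hg)).symm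
    _ ≤ τ x := tau_mono h hgx

/-- The trace on `range τ` of a nontrivial τ-filter is a nontrivial filter of `range τ`. -/
lemma trace_filter {τ : M → M} (h : IsStateOperator τ) {G : Set M}
    (hG : IsFilterOn Set.univ G) (hτG : τ '' G ⊆ G) :
    IsFilterOn (Set.range τ) (G ∩ Set.range τ) := by
  obtain ⟨_, hG1, hGm, hGu⟩ := hG
  refine ⟨Set.inter_subset_right, ⟨hG1, ⟨1, tau_one h⟩⟩, ?_, ?_⟩
  · rintro x ⟨hxG, hxS⟩ y ⟨hyG, hyS⟩
    exact ⟨hGm x hxG y hyG, range_mul_mem h hxS hyS⟩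
  · rintro x ⟨hxG, _⟩ y hyS hxy
    exact ⟨hGu x hxG y trivial hxy, hyS⟩

end Aux

/-- For a state BL-algebra (M,τ) with τ faithful, (M,τ) is subdirectly irreducible
(has a least nontrivial τ-filter) iff the image τ(M) is a subdirectly irreducible
BL-algebra (has a least nontrivial filter). -/
theorem stmt13 {M : Type*} [BLAlgebra M] (τ : M → M) (hτ : IsStateOperator τ)
    (hfaith : ∀ a, τ a = 1 → a = 1) :
    (∃ F : Set M, IsFilterOn Set.univ F ∧ τ '' F ⊆ F ∧ F ≠ {1} ∧
      ∀ G : Set M, IsFilterOn Set.univ G → τ '' G ⊆ G → G ≠ {1} → F ⊆ G) ↔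
    (∃ F : Set M, IsFilterOn (Set.range τ) F ∧ F ≠ {1} ∧
      ∀ G : Set M, IsFilterOn (Set.range τ) G → G ≠ {1} → F ⊆ G) := by
  constructor
  · rintro ⟨F, hF, hτF, hFne, hmin⟩
    refine ⟨F ∩ Set.range τ, trace_filter hτ hF hτF, ?_, ?_⟩
    · obtain ⟨x, hxF, hx1⟩ := exists_ne_one_of_ne_singleton hF.2.1 hFne
      have hτx : τ x ∈ F ∩ Set.range τ := ⟨hτF ⟨x, hxF, rfl⟩, ⟨x, rfl⟩⟩
      intro heq
      rw [heq] at hτx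
      exact hx1 (hfaith x hτx)
    · intro G hG hGne
      set Ghat : Set M := {x : M | ∃ g ∈ G, g ≤ x} with hGhatdef
      obtain ⟨hGhatf, hGhatτ⟩ := upclosure_filter hτ hG
      have hGhatne : Ghat ≠ {1} := by
        obtain ⟨g, hgG, hg1⟩ := exists_ne_one_of_ne_singleton hG.2.1 hGne
        intro heq
        have : g ∈ Ghat := ⟨g, hgG, le_rfl⟩
        rw [heq] at this
        exact hg1 this
      have hFGhat : F ⊆ Ghat := hmin Ghat hGhatf hGhatτ hGhatne
      rintro x ⟨hxF, hxS⟩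
      obtain ⟨g, hgG, hgx⟩ := hFGhat hxF
      exact hG.2.2.2 g hgG x hxS hgx
  · rintro ⟨F, hF, hFne, hmin⟩
    refine ⟨{x : M | ∃ f ∈ F, f ≤ x}, (upclosure_filter hτ hF).1,
      (upclosure_filter hτ hF).2, ?_, ?_⟩
    · obtain ⟨f, hfF, hf1⟩ := exists_ne_one_of_ne_singleton hF.2.1 hFne
      intro heq
      have : f ∈ {x : M | ∃ f ∈ F, f ≤ x} := ⟨f, hfF, le_rfl⟩
      rw [heq] at this
      exact hf1 this
    · intro G hG hτG hGne
      have hGSne : G ∩ Set.range τ ≠ {1} := by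
        obtain ⟨g, hgG, hg1⟩ := exists_ne_one_of_ne_singleton hG.2.1 hGne
        have hτg : τ g ∈ G ∩ Set.range τ := ⟨hτG ⟨g, hgG, rfl⟩, ⟨g, rfl⟩⟩
        intro heq
        rw [heq] at hτg
        exact hg1 (hfaith g hτg)
      have hFG : F ⊆ G ∩ Set.range τ := hmin _ (trace_filter hτ hG hτG) hGSne
      rintro x ⟨f, hfF, hfx⟩
      exact hG.2.2.2 f (hFG hfF).1 x trivial hfx
end

section
/- Let (M,τ) be a subdirectly irreducible state BL-algebra. Then Ker(τ) = {a : τ(a) = 1} and the image τ(M) have the disjunction property: for x ∈ Ker(τ) and y ∈ τ(M), if x ∨ y = 1 then x = 1 or y = 1. -/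
namespace BLaux
open BLAlgebra
variable {M : Type*} [BLAlgebra M]

lemma le_one (a : M) : a ≤ 1 := by rw [BLAlgebra.one_eq_top]; exact le_top

lemma le_res {a b c : M} (h : a * c ≤ b) : c ≤ residuum a b :=
  (adjoint a b c).mpr h

lemma res_spec {a b c : M} (h : c ≤ residuum a b) : a * c ≤ b :=
  (adjoint a b c).mp h

lemma mul_le_mul_left'' {b c : M} (h : b ≤ c) (a : M) : a * b ≤ a * c :=
  res_spec (h.trans (le_res le_rfl))

lemma mul_le_mul'' {a b c d : M} (h1 : a ≤ b) (h2 : c ≤ d) : a * c ≤ b * d := by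
  calc a * c ≤ a * d := mul_le_mul_left'' h2 a
    _ = d * a := mul_comm _ _
    _ ≤ d * b := mul_le_mul_left'' h1 d
    _ = b * d := mul_comm _ _

lemma mul_le_left (a b : M) : a * b ≤ b := by
  have := mul_le_mul'' (le_one a) (le_refl b); rwa [one_mul] at this

lemma mul_le_right (a b : M) : a * b ≤ a := by
  rw [mul_comm]; exact mul_le_left b a

lemma mul_sup (a b c : M) : a * (b ⊔ c) = a * b ⊔ a * c := by
  apply le_antisymm
  · exact res_spec (sup_le (le_res le_sup_left) (le_res le_sup_right))
  · exact sup_le (mul_le_mul_left'' le_sup_left a) (mul_le_mul_left'' le_sup_right a)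

lemma sup_mul (a b c : M) : (a ⊔ b) * c = a * c ⊔ b * c := by
  rw [mul_comm, mul_sup, mul_comm c a, mul_comm c b]

lemma pow_le_pow'' {a b : M} (h : a ≤ b) (n : ℕ) : a ^ n ≤ b ^ n := by
  induction n with
  | zero => simp
  | succ n ih => rw [pow_succ, pow_succ]; exact mul_le_mul'' ih h

lemma sup_pow_one {x y : M} (h : x ⊔ y = 1) : ∀ n : ℕ, x ^ n ⊔ y = 1 := by
  intro n
  induction n with
  | zero => rw [pow_zero]; exact le_antisymm (le_one _) le_sup_left
  | succ n ih =>
    apply le_antisymm (le_one _)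
    have key : (x ^ n ⊔ y) * (x ⊔ y) ≤ x ^ (n + 1) ⊔ y := by
      rw [sup_mul, mul_sup, mul_sup]
      apply sup_le (sup_le ?_ ?_) (sup_le ?_ ?_)
      · rw [← pow_succ]; exact le_sup_left
      · exact (mul_le_left _ y).trans le_sup_right
      · exact (mul_le_right y x).trans le_sup_right
      · exact (mul_le_right y y).trans le_sup_right
    calc (1 : M) = (x ^ n ⊔ y) * (x ⊔ y) := by rw [ih, h, mul_one]
      _ ≤ x ^ (n + 1) ⊔ y := key

lemma sup_pow {x y : M} (h : x ⊔ y = 1) (n m : ℕ) : x ^ n ⊔ y ^ m = 1 := by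
  have h1 : x ^ n ⊔ y = 1 := sup_pow_one h n
  have h2 : y ⊔ x ^ n = 1 := by rwa [sup_comm] at h1
  have := sup_pow_one h2 m
  rwa [sup_comm] at this

lemma res_self (a : M) : residuum a a = 1 :=
  le_antisymm (le_one _) (le_res (by rw [mul_one]))

lemma tau_one {τ : M → M} (hτ : IsStateOperator τ) : τ 1 = 1 := by
  obtain ⟨-, h2, -, -, -⟩ := hτ
  have := h2 1 1
  rw [res_self, inf_idem, res_self] at this
  exact this

lemma tau_tau {τ : M → M} (hτ : IsStateOperator τ) (x : M) : τ (τ x) = τ x := by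
  have h4 := hτ.2.2.2.1
  simpa [tau_one hτ] using h4 x 1

lemma tau_mono {τ : M → M} (hτ : IsStateOperator τ) {a b : M} (h : a ≤ b) :
    τ a ≤ τ b := by
  have h3 := hτ.2.2.1
  have hab : a = b * residuum b a := by
    rw [← BLAlgebra.div]; exact (inf_eq_right.mpr h).symm
  calc τ a = τ (b * residuum b a) := by rw [← hab]
    _ = τ b * τ (residuum b (b * residuum b a)) := h3 b _
    _ ≤ τ b * 1 := mul_le_mul_left'' (le_one _) _
    _ = τ b := mul_one _

lemma tau_mul_ge {τ : M → M} (hτ : IsStateOperator τ) (x y : M) :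
    τ x * τ y ≤ τ (x * y) := by
  have h3 := hτ.2.2.1
  rw [h3 x y]
  exact mul_le_mul_left'' (tau_mono hτ (le_res le_rfl)) _

lemma tau_pow_ge {τ : M → M} (hτ : IsStateOperator τ) (x : M) (n : ℕ) :
    (τ x) ^ n ≤ τ (x ^ n) := by
  induction n with
  | zero => simp [tau_one hτ]
  | succ n ih =>
    rw [pow_succ, pow_succ]
    exact (mul_le_mul'' ih le_rfl).trans (tau_mul_ge hτ _ x)

/-- The filter generated by `w`, when `w ≤ τ w`, is a nontrivial-if-`w ≠ 1`
τ-filter containing `w`. -/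
lemma gen_filter {τ : M → M} (hτ : IsStateOperator τ) (w : M) (hw : w ≤ τ w) :
    IsFilterOn Set.univ {a : M | ∃ n : ℕ, w ^ n ≤ a} ∧
    τ '' {a : M | ∃ n : ℕ, w ^ n ≤ a} ⊆ {a : M | ∃ n : ℕ, w ^ n ≤ a} ∧
    w ∈ {a : M | ∃ n : ℕ, w ^ n ≤ a} := by
  refine ⟨⟨Set.subset_univ _, ⟨0, by rw [pow_zero]⟩, ?_, ?_⟩, ?_, ⟨1, by rw [pow_one]⟩⟩
  · rintro a ⟨n, hn⟩ b ⟨m, hm⟩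
    exact ⟨n + m, by rw [pow_add]; exact mul_le_mul'' hn hm⟩
  · rintro a ⟨n, hn⟩ b - hab
    exact ⟨n, hn.trans hab⟩
  · rintro _ ⟨a, ⟨n, hn⟩, rfl⟩
    exact ⟨n, ((pow_le_pow'' hw n).trans (tau_pow_ge hτ w n)).trans (tau_mono hτ hn)⟩

end BLaux

/-- In a subdirectly irreducible state BL-algebra, Ker(τ) and τ(M) have the
disjunction property. -/
theorem stmt14 {M : Type*} [BLAlgebra M] (τ : M → M) (hτ : IsStateOperator τ)
    (hSI : ∃ F : Set M, IsFilterOn Set.univ F ∧ τ '' F ⊆ F ∧ F ≠ {1} ∧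
      ∀ G : Set M, IsFilterOn Set.univ G → τ '' G ⊆ G → G ≠ {1} → F ⊆ G) :
    ∀ x, τ x = 1 → ∀ y ∈ Set.range τ, x ⊔ y = 1 → x = 1 ∨ y = 1 := by
  intro x hx y hy hxy
  by_contra hcon
  push_neg at hcon
  obtain ⟨hx1, hy1⟩ := hcon
  obtain ⟨F, hF, hFτ, hFne, hmin⟩ := hSI
  have hxw : x ≤ τ x := hx ▸ BLaux.le_one x
  obtain ⟨z, rfl⟩ := hy
  have hyw : τ z ≤ τ (τ z) := (BLaux.tau_tau hτ z).symm.le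
  obtain ⟨hFx, hFxτ, hxmem⟩ := BLaux.gen_filter hτ x hxw
  obtain ⟨hFy, hFyτ, hymem⟩ := BLaux.gen_filter hτ (τ z) hyw
  have hFxne : {a : M | ∃ n : ℕ, x ^ n ≤ a} ≠ {1} := by
    intro h
    exact hx1 (by have := hxmem; rw [h] at this; exact this)
  have hFyne : {a : M | ∃ n : ℕ, (τ z) ^ n ≤ a} ≠ {1} := by
    intro h
    exact hy1 (by have := hymem; rw [h] at this; exact this)
  have hsub1 := hmin _ hFx hFxτ hFxne
  have hsub2 := hmin _ hFy hFyτ hFyne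
  have h1F : (1 : M) ∈ F := hF.2.1
  have hns : ¬ F ⊆ {1} := fun h =>
    hFne (Set.Subset.antisymm h (Set.singleton_subset_iff.mpr h1F))
  obtain ⟨a, haF, ha1⟩ := Set.not_subset.mp hns
  obtain ⟨n, hn⟩ := hsub1 haF
  obtain ⟨m, hm⟩ := hsub2 haF
  have hle : (1 : M) ≤ a := by
    rw [← BLaux.sup_pow hxy n m]
    exact sup_le hn hm
  exact ha1 (le_antisymm (BLaux.le_one a) hle)
end

section
/- In a BL-algebra M, for any elements x, y and any natural number n, (x ∨ y)^n = x^n ∨ y^n, where powers are taken with respect to the monoid operation ⊙. -/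
namespace BLAux

variable {M : Type*} [BLAlgebra M]

open BLAlgebra

lemma le_one' (a : M) : a ≤ 1 := by rw [one_eq_top]; exact le_top

lemma mul_le_mul_left'' (a : M) {b c : M} (h : b ≤ c) : a * b ≤ a * c := by
  have h1 : c ≤ residuum a (a * c) := (adjoint a (a * c) c).mpr le_rfl
  exact (adjoint a (a * c) b).mp (h.trans h1)

lemma mul_le_mul'' {a b c d : M} (h1 : a ≤ b) (h2 : c ≤ d) : a * c ≤ b * d := by
  calc a * c ≤ a * d := mul_le_mul_left'' a h2
    _ = d * a := mul_comm _ _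
    _ ≤ d * b := mul_le_mul_left'' d h1
    _ = b * d := mul_comm _ _

lemma mul_le_left' (a b : M) : a * b ≤ a := by
  calc a * b ≤ a * 1 := mul_le_mul_left'' a (le_one' b)
    _ = a := mul_one a

lemma mul_le_right' (a b : M) : a * b ≤ b := by
  rw [mul_comm]; exact mul_le_left' b a

lemma mul_sup' (a b c : M) : a * (b ⊔ c) = a * b ⊔ a * c := by
  apply le_antisymm
  · exact (adjoint a (a * b ⊔ a * c) (b ⊔ c)).mp
      (sup_le ((adjoint a (a * b ⊔ a * c) b).mpr le_sup_left)
        ((adjoint a (a * b ⊔ a * c) c).mpr le_sup_right))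
  · exact sup_le (mul_le_mul_left'' a le_sup_left) (mul_le_mul_left'' a le_sup_right)

lemma pow_le_pow'' {a b : M} (h : a ≤ b) (n : ℕ) : a ^ n ≤ b ^ n := by
  induction n with
  | zero => simp
  | succ k ih => rw [pow_succ, pow_succ]; exact mul_le_mul'' ih h

lemma sup_eq_top_pow {a b : M} (h : a ⊔ b = ⊤) (n : ℕ) : a ^ n ⊔ b = ⊤ := by
  induction n with
  | zero => rw [pow_zero, one_eq_top, top_sup_eq]
  | succ k ih =>
    apply top_unique
    have htop : (⊤ : M) = (a ^ k ⊔ b) * (a ⊔ b) := by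
      rw [ih, h, ← one_eq_top, one_mul]
    rw [htop, mul_sup']
    apply sup_le
    · rw [mul_comm, mul_sup']
      apply sup_le
      · rw [← pow_succ']; exact le_sup_left
      · exact le_sup_of_le_right (mul_le_right' a b)
    · exact le_sup_of_le_right (mul_le_right' _ b)

lemma sup_eq_top_pow_pow {a b : M} (h : a ⊔ b = ⊤) (n : ℕ) : a ^ n ⊔ b ^ n = ⊤ := by
  have h1 : a ^ n ⊔ b = ⊤ := sup_eq_top_pow h n
  have h2 : b ^ n ⊔ a ^ n = ⊤ := sup_eq_top_pow (by rw [sup_comm]; exact h1) n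
  rw [sup_comm]; exact h2

end BLAux

/-- In a BL-algebra, (x ⊔ y)^n = x^n ⊔ y^n. -/
theorem stmt15 {M : Type*} [BLAlgebra M] (x y : M) (n : ℕ) :
    (x ⊔ y) ^ n = x ^ n ⊔ y ^ n := by
  open BLAlgebra BLAux in
  apply le_antisymm
  · set u := residuum x y with hu_def
    set v := residuum y x with hv_def
    have hu : (x ⊔ y) * u ≤ y := by
      rw [mul_comm, mul_sup']
      apply sup_le
      · rw [mul_comm, ← BLAlgebra.div]; exact inf_le_right
      · rw [mul_comm]; exact mul_le_left' y u
    have hv : (x ⊔ y) * v ≤ x := by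
      rw [mul_comm, mul_sup']
      apply sup_le
      · rw [mul_comm]; exact mul_le_left' x v
      · rw [mul_comm, ← BLAlgebra.div]; exact inf_le_right
    have htop : u ^ n ⊔ v ^ n = ⊤ := sup_eq_top_pow_pow (BLAlgebra.prelin x y) n
    calc (x ⊔ y) ^ n = (x ⊔ y) ^ n * ⊤ := by rw [← BLAlgebra.one_eq_top, mul_one]
      _ = (x ⊔ y) ^ n * (u ^ n ⊔ v ^ n) := by rw [htop]
      _ = (x ⊔ y) ^ n * u ^ n ⊔ (x ⊔ y) ^ n * v ^ n := mul_sup' _ _ _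
      _ = ((x ⊔ y) * u) ^ n ⊔ ((x ⊔ y) * v) ^ n := by rw [← mul_pow, ← mul_pow]
      _ ≤ y ^ n ⊔ x ^ n := sup_le_sup (pow_le_pow'' hu n) (pow_le_pow'' hv n)
      _ = x ^ n ⊔ y ^ n := sup_comm _ _
  · exact sup_le (pow_le_pow'' le_sup_left n) (pow_le_pow'' le_sup_right n)
end

section
/- Let V be a variety (class closed under homomorphic images, subalgebras, products) of algebras of type F with the congruence extension property, and let τ be an idempotent endomorphism of A ∈ V. If B is a subalgebra of A closed under τ and φ is a τ-compatible congruence on B, then the congruence Θ(φ) on A generated by φ is itself τ-compatible, and Θ(φ) ∩ (B × B) = φ; hence the variety of state-morphism algebras over V also has the congruence extension property. -/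
/-- If A has the congruence extension property, τ is an idempotent endomorphism of A,
B is a τ-closed subalgebra, and φ is a τ-compatible congruence on B, then the
congruence Θ(φ) on A generated by φ is τ-compatible and restricts to φ on B;
hence the congruence extension property passes to state-morphism algebras. -/
theorem stmt19 {M : Type*} [Monoid M]
    (hCEP : ∀ (B : Submonoid M) (φ : Con B), ∃ θ : Con M, ∀ x y : B, θ (x : M) y ↔ φ x y)
    (τ : M →* M) (hτ : ∀ x, τ (τ x) = τ x)
    (B : Submonoid M) (hB : ∀ x ∈ B, τ x ∈ B)
    (φ : Con B)
    (hφ : ∀ x y : B, φ x y → φ ⟨τ x, hB x x.2⟩ ⟨τ y, hB y y.2⟩) :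
    (∀ a b, conGen (fun a b => ∃ (ha : a ∈ B) (hb : b ∈ B), φ ⟨a, ha⟩ ⟨b, hb⟩) a b →
      conGen (fun a b => ∃ (ha : a ∈ B) (hb : b ∈ B), φ ⟨a, ha⟩ ⟨b, hb⟩) (τ a) (τ b)) ∧
    (∀ x y : B, conGen (fun a b => ∃ (ha : a ∈ B) (hb : b ∈ B), φ ⟨a, ha⟩ ⟨b, hb⟩) (x : M) y ↔ φ x y) ∧
    (∃ θ : Con M, (∀ x y, θ x y → θ (τ x) (τ y)) ∧ ∀ x y : B, θ (x : M) y ↔ φ x y) := by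
  set r : M → M → Prop := fun a b => ∃ (ha : a ∈ B) (hb : b ∈ B), φ ⟨a, ha⟩ ⟨b, hb⟩ with hr
  have hcompat : ∀ a b, conGen r a b → conGen r (τ a) (τ b) := by
    intro a b h
    replace h : ConGen.Rel r a b := h
    induction h with
    | of x y hxy =>
      obtain ⟨hx, hy, hxy⟩ := hxy
      exact ConGen.Rel.of _ _ ⟨hB _ hx, hB _ hy, hφ ⟨x, hx⟩ ⟨y, hy⟩ hxy⟩
    | refl x => exact ConGen.Rel.refl _
    | symm _ ih => exact ConGen.Rel.symm ih
    | trans _ _ ih1 ih2 => exact ConGen.Rel.trans ih1 ih2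
    | mul _ _ ih1 ih2 =>
      rw [τ.map_mul, τ.map_mul]
      exact ConGen.Rel.mul ih1 ih2
  obtain ⟨θ, hθ⟩ := hCEP B φ
  have hle : conGen r ≤ θ := by
    apply Con.conGen_le.mpr
    rintro a b ⟨ha, hb, hab⟩
    exact (hθ ⟨a, ha⟩ ⟨b, hb⟩).mpr hab
  have hrestr : ∀ x y : B, conGen r (x : M) y ↔ φ x y := by
    intro x y
    constructor
    · intro h
      exact (hθ x y).mp (hle h)
    · intro h
      exact ConGen.Rel.of _ _ ⟨x.2, y.2, by simpa using h⟩
  exact ⟨hcompat, hrestr, conGen r, hcompat, hrestr⟩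
end
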